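/- Define functions E_m : (0,∞) → ℝ recursively by E_0(t) = (4πt)^{-1/2} and E_m(t) = −(e^{(2m−1)t}/(2(2m−1)π)) E'_{m−1}(t) for m ≥ 1. Then for every m ≥ 1 and t > 0, E_m(t) = (4πt)^{-(2m+1)/2} e^{m²t} Σ_{k=0}^{m−1} (−1)^k (Γ(m−k+1/2)/Γ(m+1/2)) c_{m,k} t^k, where c_{m,0} = 1 and c_{m,k} = Σ_{1 ≤ i_1 < ⋯ < i_k ≤ m−1} i_1² ⋯ i_k² for 1 ≤ k ≤ m−1. -/

import Mathlib

open Real Finset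

/-- `c m k` is the `k`-th elementary symmetric polynomial of `1², 2², …, (m-1)²`. -/
noncomputable def c (m k : ℕ) : ℝ :=
  ∑ A ∈ (Finset.Icc 1 (m - 1)).powersetCard k, ∏ i ∈ A, (i : ℝ) ^ 2

lemma c_zero (m : ℕ) : c m 0 = 1 := by simp [c]

lemma c_big {m k : ℕ} (h : m ≤ k) (hm : 1 ≤ m) : c m k = 0 := by
  have : ((Finset.Icc 1 (m-1)).powersetCard k) = ∅ := by
    rw [Finset.powersetCard_eq_empty, Nat.card_Icc]
    omega
  simp [c, this]

lemma c_rec (m k : ℕ) (hm : 1 ≤ m) (hk : 1 ≤ k) :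
    c (m + 1) k = c m k + (m : ℝ) ^ 2 * c m (k - 1) := by
  obtain ⟨j, rfl⟩ := Nat.exists_eq_add_of_le hk
  have hk1 : 1 + j = j + 1 := Nat.add_comm 1 j
  rw [hk1]
  have hnm : m ∉ Finset.Icc 1 (m - 1) := by simp; omega
  have hins : Finset.Icc 1 ((m+1) - 1) = insert m (Finset.Icc 1 (m - 1)) := by
    have hms : (m + 1) - 1 = m := by omega
    rw [hms]
    ext x; simp [Finset.mem_Icc, Finset.mem_insert]; omega
  have hj : (j + 1) - 1 = j := by omega
  rw [hj, c, hins, Finset.powersetCard_succ_insert hnm, Finset.sum_union, Finset.sum_image]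
  · congr 1
    rw [c, Finset.mul_sum]
    apply Finset.sum_congr rfl
    intro A hA
    rw [Finset.mem_powersetCard] at hA
    have hmA : m ∉ A := fun h => hnm (hA.1 h)
    rw [Finset.prod_insert hmA]
  · intro A hA B hB hAB
    rw [Finset.mem_coe, Finset.mem_powersetCard] at hA hB
    have hmA : m ∉ A := fun h => hnm (hA.1 h)
    have hmB : m ∉ B := fun h => hnm (hB.1 h)
    calc A = (insert m A).erase m := (Finset.erase_insert hmA).symm
    _ = (insert m B).erase m := by rw [hAB]
    _ = B := Finset.erase_insert hmB
  · rw [Finset.disjoint_left]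
    intro A hA hA'
    rw [Finset.mem_powersetCard] at hA
    rw [Finset.mem_image] at hA'
    obtain ⟨B, hB, rfl⟩ := hA'
    exact hnm (hA.1 (Finset.mem_insert_self m B))

noncomputable def aa (m k : ℕ) : ℝ :=
  (-1:ℝ)^k * (Real.Gamma ((m:ℝ) - (k:ℝ) + 1/2) / Real.Gamma ((m:ℝ) + 1/2)) * c m k

lemma aa_def (m k : ℕ) : (-1:ℝ)^k *
    (Real.Gamma ((m:ℝ) - (k:ℝ) + 1/2) / Real.Gamma ((m:ℝ) + 1/2)) * c m k = aa m k := rfl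

lemma Gamma_half_ne (x : ℝ) (hx : 0 < x) : Real.Gamma x ≠ 0 :=
  (Real.Gamma_pos_of_pos hx).ne'

lemma aa_zero (m : ℕ) : aa m 0 = 1 := by
  simp only [aa, c_zero, pow_zero, Nat.cast_zero, sub_zero, mul_one, one_mul]
  exact div_self (Gamma_half_ne _ (by positivity))

lemma aa_top {m : ℕ} (hm : 1 ≤ m) : aa m m = 0 := by
  simp [aa, c_big le_rfl hm]

lemma aa_rec (m k : ℕ) (hk : 1 ≤ k) (hkm : k ≤ m) :
    (2*(m:ℝ)+1) * aa (m+1) k = (2*(m:ℝ)+1-2*(k:ℝ)) * aa m k - 2*(m:ℝ)^2 * aa m (k-1) := by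
  obtain ⟨j, rfl⟩ := Nat.exists_eq_add_of_le hk
  have hm : 1 ≤ m := le_trans hk hkm
  have hj : (1 + j) - 1 = j := by omega
  have hne : ((m:ℝ) - ↑(1+j) + 1/2) ≠ 0 := by
    have hjm : ((1+j:ℕ):ℝ) ≤ (m:ℝ) := Nat.cast_le.mpr hkm
    intro h; linarith
  have hG3 : Real.Gamma ((m:ℝ) + 1/2) ≠ 0 := Gamma_half_ne _ (by positivity)
  have g1 : Real.Gamma ((↑(m+1):ℝ) + 1/2) = ((m:ℝ)+1/2) * Real.Gamma ((m:ℝ)+1/2) := by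
    rw [show ((↑(m+1):ℝ) + 1/2) = ((m:ℝ)+1/2) + 1 by push_cast; ring,
      Real.Gamma_add_one (by positivity)]
  have g2 : Real.Gamma ((↑(m+1):ℝ) - ↑(1+j) + 1/2)
      = ((m:ℝ) - ↑(1+j) + 1/2) * Real.Gamma ((m:ℝ) - ↑(1+j) + 1/2) := by
    rw [show ((↑(m+1):ℝ) - ↑(1+j) + 1/2) = ((m:ℝ) - ↑(1+j) + 1/2) + 1 by push_cast; ring,
      Real.Gamma_add_one hne]
  have g3 : Real.Gamma ((m:ℝ) - ↑j + 1/2)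
      = ((m:ℝ) - ↑(1+j) + 1/2) * Real.Gamma ((m:ℝ) - ↑(1+j) + 1/2) := by
    rw [show ((m:ℝ) - ↑j + 1/2) = ((m:ℝ) - ↑(1+j) + 1/2) + 1 by push_cast; ring,
      Real.Gamma_add_one hne]
  rw [aa, aa, aa, hj, g1, g2, g3, c_rec m (1+j) hm hk, hj]
  push_cast
  field_simp
  ring

lemma sum_identity (m : ℕ) (hm : 1 ≤ m) (t : ℝ) :
    ∑ k ∈ range (m+1), aa (m+1) k * t^k
      = ∑ k ∈ range m, aa m k * t^k
        - 2/(2*(m:ℝ)+1) * ((m:ℝ)^2 * t * ∑ k ∈ range m, aa m k * t^k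
            + t * ∑ k ∈ range m, aa m k * ((k:ℝ) * t^(k-1))) := by
  have h2m1 : (2*(m:ℝ)+1) ≠ 0 := by positivity
  have id2 : t * ∑ k ∈ range m, aa m k * ((k:ℝ) * t^(k-1))
      = ∑ k ∈ range m, aa m k * ((k:ℝ) * t^k) := by
    rw [Finset.mul_sum]
    refine Finset.sum_congr rfl fun k _ => ?_
    cases k with
    | zero => simp
    | succ n =>
        have : (n + 1) - 1 = n := by omega
        rw [this]
        push_cast
        ring
  rw [id2]
  have key : (2*(m:ℝ)+1) * ∑ k ∈ range (m+1), aa (m+1) k * t^k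
      = (2*(m:ℝ)+1) * ∑ k ∈ range m, aa m k * t^k
        - 2*(m:ℝ)^2 * (t * ∑ k ∈ range m, aa m k * t^k)
        - 2 * ∑ k ∈ range m, aa m k * ((k:ℝ) * t^k) := by
    have S1 : (2*(m:ℝ)+1) * ∑ k ∈ range (m+1), aa (m+1) k * t^k
        = ∑ j ∈ range m, ((2*(m:ℝ)+1-2*(↑(j+1):ℝ)) * aa m (j+1) * t^(j+1)
            - 2*(m:ℝ)^2 * (aa m j * t^(j+1)))
          + (2*(m:ℝ)+1-2*(↑(0:ℕ):ℝ)) * aa m 0 * t^(0:ℕ) := by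
      rw [Finset.mul_sum, Finset.sum_range_succ']
      congr 1
      · refine Finset.sum_congr rfl fun j hj => ?_
        have hjm : j + 1 ≤ m := Finset.mem_range.mp hj
        have hrec := aa_rec m (j+1) (by omega) hjm
        have h1 : (j+1) - 1 = j := by omega
        rw [h1] at hrec
        linear_combination t^(j+1) * hrec
      · simp [aa_zero]
    rw [S1]
    rw [Finset.sum_sub_distrib]
    have S3 : (∑ j ∈ range m, (2*(m:ℝ)+1-2*(↑(j+1):ℝ)) * aa m (j+1) * t^(j+1))
          + (2*(m:ℝ)+1-2*(↑(0:ℕ):ℝ)) * aa m 0 * t^(0:ℕ)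
        = ∑ k ∈ range (m+1), (2*(m:ℝ)+1-2*(k:ℝ)) * aa m k * t^k :=
      (Finset.sum_range_succ' (fun k => (2*(m:ℝ)+1-2*(k:ℝ)) * aa m k * t^k) m).symm
    rw [sub_add_eq_add_sub, S3, Finset.sum_range_succ, aa_top hm]
    have S5 : ∑ k ∈ range m, (2*(m:ℝ)+1-2*(k:ℝ)) * aa m k * t^k
        = (2*(m:ℝ)+1) * ∑ k ∈ range m, aa m k * t^k
          - 2 * ∑ k ∈ range m, aa m k * ((k:ℝ) * t^k) := by
      rw [Finset.mul_sum, Finset.mul_sum, ← Finset.sum_sub_distrib]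
      exact Finset.sum_congr rfl fun k _ => by ring
    rw [S5]
    have S6 : ∑ j ∈ range m, 2*(m:ℝ)^2 * (aa m j * t^(j+1))
        = 2*(m:ℝ)^2 * (t * ∑ j ∈ range m, aa m j * t^j) := by
      rw [Finset.mul_sum, Finset.mul_sum]
      exact Finset.sum_congr rfl fun k _ => by ring
    rw [S6]
    ring
  field_simp
  simp only [mul_assoc] at key ⊢
  linarith [key]

/-- The small-time asymptotic of the diagonal of the heat kernel of the
`(2m+1)`-dimensional unit sphere: starting from `E₀(t) = (4πt)^{-1/2}` and iterating
`E_m(t) = -(e^{(2m-1)t}/(2(2m-1)π)) E'_{m-1}(t)`, one has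
`E_m(t) = (4πt)^{-(2m+1)/2} e^{m²t} Σ_{k=0}^{m-1} (-1)^k (Γ(m-k+1/2)/Γ(m+1/2)) c_{m,k} t^k`. -/
theorem spherical_diagonal_asymptotic (E : ℕ → ℝ → ℝ)
    (hE0 : ∀ t ∈ Set.Ioi (0 : ℝ), E 0 t = (4 * π * t) ^ (-(1 : ℝ) / 2))
    (hErec : ∀ m : ℕ, 1 ≤ m → ∀ t ∈ Set.Ioi (0 : ℝ),
      E m t = -(Real.exp ((2 * (m : ℝ) - 1) * t) / (2 * (2 * (m : ℝ) - 1) * π)) *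
        deriv (E (m - 1)) t) :
    ∀ m : ℕ, 1 ≤ m → ∀ t ∈ Set.Ioi (0 : ℝ),
      E m t = (4 * π * t) ^ (-(2 * (m : ℝ) + 1) / 2) * Real.exp ((m : ℝ) ^ 2 * t) *
        ∑ k ∈ Finset.range m,
          (-1 : ℝ) ^ k * (Real.Gamma ((m : ℝ) - (k : ℝ) + 1 / 2) / Real.Gamma ((m : ℝ) + 1 / 2)) *
            c m k * t ^ k := by
  intro m hm
  induction m, hm using Nat.le_induction with
  | base =>
    intro t ht
    have htp : (0:ℝ) < t := ht
    have h4πt : (4*π*t) ≠ 0 := by positivity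
    have hmem : Set.Ioi (0:ℝ) ∈ nhds t := isOpen_Ioi.mem_nhds htp
    have heq : E 0 =ᶠ[nhds t] (fun s => (4*π*s) ^ (-(1:ℝ)/2)) :=
      Filter.eventuallyEq_of_mem hmem (fun s hs => hE0 s hs)
    have h1 : HasDerivAt (fun s : ℝ => (4*π*s) ^ (-(1:ℝ)/2))
        (4*π*1 * (-(1:ℝ)/2) * (4*π*t) ^ (-(1:ℝ)/2 - 1)) t :=
      ((hasDerivAt_id t).const_mul (4*π)).rpow_const (Or.inl h4πt)
    rw [hErec 1 le_rfl t ht]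
    norm_num
    rw [heq.deriv_eq, h1.deriv, c_zero,
      div_self (Gamma_half_ne _ (by norm_num : (0:ℝ) < 3/2)),
      show (-1/2 - 1 : ℝ) = -(3/2) by norm_num]
    field_simp
    ring
  | succ m hm IH =>
    intro t ht
    have htp : (0:ℝ) < t := ht
    have h4πt : (4*π*t) ≠ 0 := by positivity
    have hmem : Set.Ioi (0:ℝ) ∈ nhds t := isOpen_Ioi.mem_nhds htp
    have heq : E m =ᶠ[nhds t]
        (fun s => (4*π*s) ^ (-(2*(m:ℝ)+1)/2) * Real.exp ((m:ℝ)^2*s)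
          * ∑ k ∈ Finset.range m, aa m k * s^k) :=
      Filter.eventuallyEq_of_mem hmem (fun s hs => by
        rw [IH s hs]; simp only [aa])
    have h1 : HasDerivAt (fun s : ℝ => (4*π*s) ^ (-(2*(m:ℝ)+1)/2))
        (4*π*1 * (-(2*(m:ℝ)+1)/2) * (4*π*t) ^ (-(2*(m:ℝ)+1)/2 - 1)) t :=
      ((hasDerivAt_id t).const_mul (4*π)).rpow_const (Or.inl h4πt)
    have h2 : HasDerivAt (fun s : ℝ => Real.exp ((m:ℝ)^2*s))
        (Real.exp ((m:ℝ)^2*t) * ((m:ℝ)^2*1)) t :=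
      ((hasDerivAt_id t).const_mul ((m:ℝ)^2)).exp
    have h3 : HasDerivAt (fun s : ℝ => ∑ k ∈ Finset.range m, aa m k * s^k)
        (∑ k ∈ Finset.range m, aa m k * ((k:ℝ) * t^(k-1))) t :=
      HasDerivAt.fun_sum (fun k _ => (hasDerivAt_pow k t).const_mul (aa m k))
    have H := (h1.fun_mul h2).fun_mul h3
    rw [hErec (m+1) (by omega) t ht]
    simp only [Nat.add_sub_cancel]
    rw [heq.deriv_eq, H.deriv]
    simp only [aa_def]
    rw [sum_identity m hm t]
    rw [show (-(2*(↑(m+1):ℝ)+1)/2) = -(2*(m:ℝ)+1)/2 - 1 by push_cast; ring]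
    rw [show ((4*π*t) ^ (-(2*(m:ℝ)+1)/2)) = (4*π*t) ^ (-(2*(m:ℝ)+1)/2 - 1) * (4*π*t) by
      rw [← Real.rpow_add_one h4πt]; norm_num]
    rw [show (2*(↑(m+1):ℝ)-1) = 2*(m:ℝ)+1 by push_cast; ring]
    rw [show Real.exp ((↑(m+1):ℝ)^2*t) = Real.exp ((2*(m:ℝ)+1)*t) * Real.exp ((m:ℝ)^2*t) by
      rw [← Real.exp_add]; congr 1; push_cast; ring]
    have h2m1 : (2*(m:ℝ)+1) ≠ 0 := by positivity
    field_simp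
    ring
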